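/- For every integer n ≥ 1, τ(n) ≡ n·σ₁(n) (mod 5), where σ₁(n) denotes the sum of the positive divisors of n. -/

import Mathlib

/-- The Ramanujan tau function: `τ(n)` is the coefficient of `qⁿ` in
`q ∏_{i≥1} (1 - qⁱ)²⁴`. Since factors with `i > n` do not affect the
coefficient of `qⁿ`, it suffices to truncate the product at `i = n`. -/
noncomputable def ramanujanTau (n : ℕ) : ℤ :=
  (Polynomial.X * ∏ i ∈ Finset.range n, (1 - Polynomial.X ^ (i + 1)) ^ 24 :
    Polynomial ℤ).coeff n


open Finset

/-! ### Faulhaber power sums -/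

lemma fh0 (c : ℕ) (hc : 1 ≤ c) : ∑ a ∈ Ico 1 c, (1:ℚ) = (c:ℚ) - 1 := by
  induction c with
  | zero => omega
  | succ c ih =>
    rcases Nat.eq_or_lt_of_le hc with h | h
    · simp [← h] <;> norm_num
    · rw [Finset.sum_Ico_succ_top (by omega)] ; rw [ih (by omega)] ; push_cast ; ring

lemma fh1 (c : ℕ) (hc : 1 ≤ c) : ∑ a ∈ Ico 1 c, (a:ℚ) = ((c:ℚ)^2 - c)/2 := by
  induction c with
  | zero => omega
  | succ c ih =>
    rcases Nat.eq_or_lt_of_le hc with h | h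
    · simp [← h] <;> norm_num
    · rw [Finset.sum_Ico_succ_top (by omega)] ; rw [ih (by omega)] ; push_cast ; ring

lemma fh2 (c : ℕ) (hc : 1 ≤ c) : ∑ a ∈ Ico 1 c, (a:ℚ)^2 = (2*(c:ℚ)^3 - 3*c^2 + c)/6 := by
  induction c with
  | zero => omega
  | succ c ih =>
    rcases Nat.eq_or_lt_of_le hc with h | h
    · simp [← h] <;> norm_num
    · rw [Finset.sum_Ico_succ_top (by omega)] ; rw [ih (by omega)] ; push_cast ; ring

lemma fh3 (c : ℕ) (hc : 1 ≤ c) : ∑ a ∈ Ico 1 c, (a:ℚ)^3 = ((c:ℚ)^4 - 2*c^3 + c^2)/4 := by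
  induction c with
  | zero => omega
  | succ c ih =>
    rcases Nat.eq_or_lt_of_le hc with h | h
    · simp [← h] <;> norm_num
    · rw [Finset.sum_Ico_succ_top (by omega)] ; rw [ih (by omega)] ; push_cast ; ring

lemma fh4 (c : ℕ) (hc : 1 ≤ c) :
    ∑ a ∈ Ico 1 c, (a:ℚ)^4 = (6*(c:ℚ)^5 - 15*c^4 + 10*c^3 - c)/30 := by
  induction c with
  | zero => omega
  | succ c ih =>
    rcases Nat.eq_or_lt_of_le hc with h | h
    · simp [← h] <;> norm_num
    · rw [Finset.sum_Ico_succ_top (by omega)] ; rw [ih (by omega)] ; push_cast ; ring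

lemma fh5 (c : ℕ) (hc : 1 ≤ c) :
    ∑ a ∈ Ico 1 c, (a:ℚ)^5 = (2*(c:ℚ)^6 - 6*c^5 + 5*c^4 - c^2)/12 := by
  induction c with
  | zero => omega
  | succ c ih =>
    rcases Nat.eq_or_lt_of_le hc with h | h
    · simp [← h] <;> norm_num
    · rw [Finset.sum_Ico_succ_top (by omega)] ; rw [ih (by omega)] ; push_cast ; ring

lemma fh6 (c : ℕ) (hc : 1 ≤ c) :
    ∑ a ∈ Ico 1 c, (a:ℚ)^6 = (6*(c:ℚ)^7 - 21*c^6 + 21*c^5 - 7*c^3 + c)/42 := by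
  induction c with
  | zero => omega
  | succ c ih =>
    rcases Nat.eq_or_lt_of_le hc with h | h
    · simp [← h] <;> norm_num
    · rw [Finset.sum_Ico_succ_top (by omega)] ; rw [ih (by omega)] ; push_cast ; ring

/-! ### The quadruple set -/

/-- quadruples (a,x,b,y), all ≥ 1, with a*x+b*y = n -/
def V (n : ℕ) : Finset (ℕ × ℕ × ℕ × ℕ) :=
  (Finset.range (n+1) ×ˢ Finset.range (n+1) ×ˢ Finset.range (n+1) ×ˢ Finset.range (n+1)).filter
    fun v => 0 < v.1 ∧ 0 < v.2.1 ∧ 0 < v.2.2.1 ∧ 0 < v.2.2.2 ∧ v.1 * v.2.1 + v.2.2.1 * v.2.2.2 = n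

lemma mem_V {n : ℕ} {v : ℕ × ℕ × ℕ × ℕ} :
    v ∈ V n ↔ 0 < v.1 ∧ 0 < v.2.1 ∧ 0 < v.2.2.1 ∧ 0 < v.2.2.2 ∧
      v.1 * v.2.1 + v.2.2.1 * v.2.2.2 = n := by
  obtain ⟨a, x, b, y⟩ := v
  simp only [V, Finset.mem_filter, Finset.mem_product, Finset.mem_range]
  constructor
  · tauto
  · rintro ⟨ha, hx, hb, hy, he⟩
    have h1 : a ≤ a * x := Nat.le_mul_of_pos_right _ hx
    have h2 : x ≤ a * x := Nat.le_mul_of_pos_left _ ha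
    have h3 : b ≤ b * y := Nat.le_mul_of_pos_right _ hy
    have h4 : y ≤ b * y := Nat.le_mul_of_pos_left _ hb
    refine ⟨⟨by omega, by omega, by omega, by omega⟩, ha, hx, hb, hy, he⟩

/-! ### The Stern–Brocot style bijection -/

def rho (v : ℕ × ℕ × ℕ × ℕ) : ℕ × ℕ × ℕ × ℕ := (v.2.2.1, v.2.2.2, v.1, v.2.1)

lemma sum_rho (n : ℕ) (P : ℕ × ℕ × ℕ × ℕ → Prop) [DecidablePred P] (ψ : ℕ × ℕ × ℕ × ℕ → ℚ) :
    ∑ v ∈ (V n).filter P, ψ v = ∑ v ∈ (V n).filter (fun v => P (rho v)), ψ (rho v) := by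
  refine Finset.sum_nbij' rho rho ?_ ?_ ?_ ?_ ?_
  · rintro ⟨a, x, b, y⟩ hv
    rw [Finset.mem_filter] at hv ⊢
    simp only [Finset.mem_filter, mem_V, rho] at hv ⊢
    obtain ⟨⟨ha, hx, hb, hy, he⟩, hP⟩ := hv
    exact ⟨⟨hb, hy, ha, hx, by rw [add_comm]; exact he⟩, hP⟩
  · rintro ⟨a, x, b, y⟩ hv
    rw [Finset.mem_filter] at hv ⊢
    simp only [Finset.mem_filter, mem_V, rho] at hv ⊢
    obtain ⟨⟨ha, hx, hb, hy, he⟩, hP⟩ := hv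
    exact ⟨⟨hb, hy, ha, hx, by rw [add_comm]; exact he⟩, hP⟩
  · rintro ⟨a, x, b, y⟩ _ ; rfl
  · rintro ⟨a, x, b, y⟩ _ ; rfl
  · rintro ⟨a, x, b, y⟩ _ ; rfl

lemma step1 (n : ℕ) (φ : ℕ × ℕ × ℕ × ℕ → ℚ) :
    ∑ v ∈ (V n).filter (fun v => ¬(v.2.1 = v.2.2.2)),
      φ (if v.2.2.2 < v.2.1 then (v.1, v.2.1 - v.2.2.2, v.1 + v.2.2.1, v.2.2.2)
         else (v.1 + v.2.2.1, v.2.1, v.2.2.1, v.2.2.2 - v.2.1))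
    = ∑ v ∈ (V n).filter (fun v => ¬(v.1 = v.2.2.1)), φ v := by
  refine Finset.sum_nbij'
    (fun v => if v.2.2.2 < v.2.1 then (v.1, v.2.1 - v.2.2.2, v.1 + v.2.2.1, v.2.2.2)
              else (v.1 + v.2.2.1, v.2.1, v.2.2.1, v.2.2.2 - v.2.1))
    (fun w => if w.1 < w.2.2.1 then (w.1, w.2.1 + w.2.2.2, w.2.2.1 - w.1, w.2.2.2)
              else (w.1 - w.2.2.1, w.2.1, w.2.2.1, w.2.1 + w.2.2.2)) ?_ ?_ ?_ ?_ ?_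
  · rintro ⟨a, x, b, y⟩ hv
    simp only [Finset.mem_filter, mem_V] at hv
    obtain ⟨⟨ha, hx, hb, hy, he⟩, hne⟩ := hv
    dsimp only
    by_cases h : y < x
    · rw [if_pos h]
      simp only [Finset.mem_filter, mem_V]
      refine ⟨⟨ha, by omega, by omega, hy, ?_⟩, by omega⟩
      have key : a * (x - y) + (a + b) * y = a * ((x - y) + y) + b * y := by ring
      rw [key, show (x - y) + y = x by omega, he]
    · rw [if_neg h]
      simp only [Finset.mem_filter, mem_V]
      refine ⟨⟨by omega, hx, hb, by omega, ?_⟩, by omega⟩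
      have key : (a + b) * x + b * (y - x) = a * x + b * (x + (y - x)) := by ring
      rw [key, show x + (y - x) = y by omega, he]
  · rintro ⟨a, x, b, y⟩ hv
    simp only [Finset.mem_filter, mem_V] at hv
    obtain ⟨⟨ha, hx, hb, hy, he⟩, hne⟩ := hv
    dsimp only
    by_cases h : a < b
    · rw [if_pos h]
      simp only [Finset.mem_filter, mem_V]
      refine ⟨⟨ha, by omega, by omega, hy, ?_⟩, by omega⟩
      have key : a * (x + y) + (b - a) * y = a * x + (a + (b - a)) * y := by ring
      rw [key, show a + (b - a) = b by omega, he]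
    · rw [if_neg h]
      simp only [Finset.mem_filter, mem_V]
      refine ⟨⟨by omega, hx, hb, by omega, ?_⟩, by omega⟩
      have key : (a - b) * x + b * (x + y) = ((a - b) + b) * x + b * y := by ring
      rw [key, show (a - b) + b = a by omega, he]
  · rintro ⟨a, x, b, y⟩ hv
    simp only [Finset.mem_filter, mem_V] at hv
    obtain ⟨⟨ha, hx, hb, hy, he⟩, hne⟩ := hv
    dsimp only
    by_cases h : y < x
    · rw [if_pos h]; dsimp only
      rw [if_pos (show a < a + b by omega)]
      simp only [Prod.mk.injEq, true_and, and_true]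
      all_goals omega
    · rw [if_neg h]; dsimp only
      rw [if_neg (show ¬(a + b < b) by omega)]
      simp only [Prod.mk.injEq, true_and, and_true]
      all_goals omega
  · rintro ⟨a, x, b, y⟩ hv
    simp only [Finset.mem_filter, mem_V] at hv
    obtain ⟨⟨ha, hx, hb, hy, he⟩, hne⟩ := hv
    dsimp only
    by_cases h : a < b
    · rw [if_pos h]; dsimp only
      rw [if_pos (show y < x + y by omega)]
      simp only [Prod.mk.injEq, true_and, and_true]
      all_goals omega
    · rw [if_neg h]; dsimp only
      rw [if_neg (show ¬(x + y < x) by omega)]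
      simp only [Prod.mk.injEq, true_and, and_true]
      all_goals omega
  · rintro ⟨a, x, b, y⟩ _ ; rfl

lemma filter_gt_eq (n : ℕ) :
    ((V n).filter (fun v => ¬(v.2.1 = v.2.2.2))).filter (fun v => v.2.2.2 < v.2.1)
      = (V n).filter (fun v => v.2.2.2 < v.2.1) := by
  rw [Finset.filter_filter]
  exact Finset.filter_congr (fun v _ => by omega)

lemma filter_lt_eq (n : ℕ) :
    ((V n).filter (fun v => ¬(v.2.1 = v.2.2.2))).filter (fun v => ¬(v.2.2.2 < v.2.1))
      = (V n).filter (fun v => v.2.1 < v.2.2.2) := by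
  rw [Finset.filter_filter]
  exact Finset.filter_congr (fun v _ => by omega)

/-- The master combinatorial identity (Liouville / Huard–Ou–Spearman–Williams style). -/
lemma master (n : ℕ) (g : ℕ → ℕ → ℚ) :
    ∑ v ∈ (V n).filter (fun v => v.2.2.2 < v.2.1),
        (g v.1 (v.1 + v.2.2.1) + g (v.2.2.1 + v.1) v.1 - g v.1 v.2.2.1 - g v.2.2.1 v.1)
      = ∑ v ∈ (V n).filter (fun v => v.2.1 = v.2.2.2), g v.1 v.2.2.1
        - ∑ v ∈ (V n).filter (fun v => v.1 = v.2.2.1), g v.1 v.2.2.1 := by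
  set φ : ℕ × ℕ × ℕ × ℕ → ℚ := fun v => g v.1 v.2.2.1 with hφ
  -- step 1 : bijection
  have A := step1 n φ
  -- split the LHS of A over x>y / x<y
  have B := Finset.sum_filter_add_sum_filter_not ((V n).filter (fun v => ¬(v.2.1 = v.2.2.2)))
      (fun v => v.2.2.2 < v.2.1)
      (fun v => φ (if v.2.2.2 < v.2.1 then (v.1, v.2.1 - v.2.2.2, v.1 + v.2.2.1, v.2.2.2)
         else (v.1 + v.2.2.1, v.2.1, v.2.2.1, v.2.2.2 - v.2.1)))
  rw [filter_gt_eq, filter_lt_eq] at B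
  -- on x>y the if evaluates to T1
  have C1 : ∑ v ∈ (V n).filter (fun v => v.2.2.2 < v.2.1),
      (fun v => φ (if v.2.2.2 < v.2.1 then (v.1, v.2.1 - v.2.2.2, v.1 + v.2.2.1, v.2.2.2)
         else (v.1 + v.2.2.1, v.2.1, v.2.2.1, v.2.2.2 - v.2.1))) v
      = ∑ v ∈ (V n).filter (fun v => v.2.2.2 < v.2.1), g v.1 (v.1 + v.2.2.1) := by
    refine Finset.sum_congr rfl (fun v hv => ?_)
    simp only [Finset.mem_filter] at hv
    dsimp only
    rw [if_pos hv.2]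
  have C2 : ∑ v ∈ (V n).filter (fun v => v.2.1 < v.2.2.2),
      (fun v => φ (if v.2.2.2 < v.2.1 then (v.1, v.2.1 - v.2.2.2, v.1 + v.2.2.1, v.2.2.2)
         else (v.1 + v.2.2.1, v.2.1, v.2.2.1, v.2.2.2 - v.2.1))) v
      = ∑ v ∈ (V n).filter (fun v => v.2.1 < v.2.2.2), g (v.1 + v.2.2.1) v.2.2.1 := by
    refine Finset.sum_congr rfl (fun v hv => ?_)
    simp only [Finset.mem_filter] at hv
    dsimp only
    rw [if_neg (show ¬(v.2.2.2 < v.2.1) by omega)]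
  -- swap the x<y sum to an x>y sum
  have E := sum_rho n (fun v => v.2.1 < v.2.2.2) (fun v => g (v.1 + v.2.2.1) v.2.2.1)
  have E' : ∑ v ∈ (V n).filter (fun v => v.2.1 < v.2.2.2), g (v.1 + v.2.2.1) v.2.2.1
      = ∑ v ∈ (V n).filter (fun v => v.2.2.2 < v.2.1), g (v.2.2.1 + v.1) v.1 := by
    rw [E]; rfl
  -- decompose the a ≠ b sum
  have F := Finset.sum_filter_add_sum_filter_not (V n) (fun v => v.1 = v.2.2.1) φ
  -- decompose the full sum by x=y, x>y, x<y
  have G1 := Finset.sum_filter_add_sum_filter_not (V n) (fun v => v.2.1 = v.2.2.2) φ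
  have G2 := Finset.sum_filter_add_sum_filter_not ((V n).filter (fun v => ¬(v.2.1 = v.2.2.2)))
      (fun v => v.2.2.2 < v.2.1) φ
  rw [filter_gt_eq, filter_lt_eq] at G2
  have G3 := sum_rho n (fun v => v.2.1 < v.2.2.2) φ
  have G3' : ∑ v ∈ (V n).filter (fun v => v.2.1 < v.2.2.2), φ v
      = ∑ v ∈ (V n).filter (fun v => v.2.2.2 < v.2.1), g v.2.2.1 v.1 := by
    rw [G3]; rfl
  -- the filter (fun v => ¬ v.1 = v.2.2.1) coincides
  rw [C1, C2, E'] at B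
  simp only [Finset.sum_add_distrib, Finset.sum_sub_distrib] at *
  linarith [A, B, F, G1, G2, G3']

/-! ### Diagonal sums and the convolution bridge -/

lemma sigma_cast (r k : ℕ) :
    ((ArithmeticFunction.sigma r k : ℕ) : ℚ) = ∑ p ∈ k.divisorsAntidiagonal, (p.1 : ℚ) ^ r := by
  rw [ArithmeticFunction.sigma_apply, Nat.sum_divisorsAntidiagonal (fun d e => (d : ℚ) ^ r)]
  push_cast
  rfl

lemma diag_xy (n : ℕ) (h : ℕ → ℕ → ℚ) :
    ∑ v ∈ (V n).filter (fun v => v.2.1 = v.2.2.2), h v.1 v.2.2.1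
      = ∑ p ∈ n.divisorsAntidiagonal, ∑ a ∈ Finset.Ico 1 p.1, h a (p.1 - a) := by
  rw [← Finset.sum_sigma n.divisorsAntidiagonal (fun p => Finset.Ico 1 p.1)
      (fun q => h q.2 (q.1.1 - q.2))]
  refine Finset.sum_nbij' (fun v => ⟨(v.1 + v.2.2.1, v.2.1), v.1⟩)
    (fun q => (q.2, q.1.2, q.1.1 - q.2, q.1.2)) ?_ ?_ ?_ ?_ ?_
  · rintro ⟨a, x, b, y⟩ hv
    simp only [Finset.mem_filter, mem_V] at hv
    obtain ⟨⟨ha, hx, hb, hy, he⟩, hxy⟩ := hv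
    subst hxy
    have hax : 0 < a * x := Nat.mul_pos ha hx
    simp only [Finset.mem_sigma, Nat.mem_divisorsAntidiagonal, Finset.mem_Ico]
    refine ⟨⟨?_, by omega⟩, by omega, by omega⟩
    have : (a + b) * x = a * x + b * x := by ring
    rw [this, he]
  · rintro ⟨⟨c, d⟩, a⟩ hq
    simp only [Finset.mem_sigma, Nat.mem_divisorsAntidiagonal, Finset.mem_Ico] at hq
    obtain ⟨⟨hcd, hn⟩, h1, h2⟩ := hq
    have hd : 0 < d := by
      rcases Nat.eq_zero_or_pos d with h | h
      · subst h; rw [Nat.mul_zero] at hcd; omega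
      · exact h
    simp only [Finset.mem_filter, mem_V]
    refine ⟨⟨by omega, hd, by omega, hd, ?_⟩, trivial⟩
    have : a * d + (c - a) * d = (a + (c - a)) * d := by ring
    rw [this, show a + (c - a) = c by omega, hcd]
  · rintro ⟨a, x, b, y⟩ hv
    simp only [Finset.mem_filter, mem_V] at hv
    obtain ⟨⟨ha, hx, hb, hy, he⟩, hxy⟩ := hv
    simp only [Prod.mk.injEq, true_and, and_true]
    omega
  · rintro ⟨⟨c, d⟩, a⟩ hq
    simp only [Finset.mem_sigma, Nat.mem_divisorsAntidiagonal, Finset.mem_Ico] at hq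
    obtain ⟨⟨hcd, hn⟩, h1, h2⟩ := hq
    dsimp only
    rw [show a + (c - a) = c by omega]
  · rintro ⟨a, x, b, y⟩ hv
    simp only [Finset.mem_filter, mem_V] at hv
    obtain ⟨⟨ha, hx, hb, hy, he⟩, hxy⟩ := hv
    dsimp only
    rw [show a + b - a = b by omega]

lemma diag_ab (n : ℕ) (h : ℕ → ℕ → ℚ) :
    ∑ v ∈ (V n).filter (fun v => v.1 = v.2.2.1), h v.1 v.2.2.1
      = ∑ p ∈ n.divisorsAntidiagonal, ((p.2 : ℚ) - 1) * h p.1 p.1 := by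
  have step : ∑ v ∈ (V n).filter (fun v => v.1 = v.2.2.1), h v.1 v.2.2.1
      = ∑ p ∈ n.divisorsAntidiagonal, ∑ x ∈ Finset.Ico 1 p.2, h p.1 p.1 := by
    rw [← Finset.sum_sigma n.divisorsAntidiagonal (fun p => Finset.Ico 1 p.2)
        (fun q => h q.1.1 q.1.1)]
    refine Finset.sum_nbij' (fun v => ⟨(v.1, v.2.1 + v.2.2.2), v.2.1⟩)
      (fun q => (q.1.1, q.2, q.1.1, q.1.2 - q.2)) ?_ ?_ ?_ ?_ ?_
    · rintro ⟨a, x, b, y⟩ hv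
      simp only [Finset.mem_filter, mem_V] at hv
      obtain ⟨⟨ha, hx, hb, hy, he⟩, hab⟩ := hv
      subst hab
      simp only [Finset.mem_sigma, Nat.mem_divisorsAntidiagonal, Finset.mem_Ico]
      have hax : 0 < a * x := Nat.mul_pos ha hx
      refine ⟨⟨?_, by omega⟩, by omega, by omega⟩
      have : a * (x + y) = a * x + a * y := by ring
      rw [this, he]
    · rintro ⟨⟨c, d⟩, x⟩ hq
      simp only [Finset.mem_sigma, Nat.mem_divisorsAntidiagonal, Finset.mem_Ico] at hq
      obtain ⟨⟨hcd, hn⟩, h1, h2⟩ := hq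
      have hc : 0 < c := by
        rcases Nat.eq_zero_or_pos c with h | h
        · subst h; rw [Nat.zero_mul] at hcd; omega
        · exact h
      simp only [Finset.mem_filter, mem_V]
      refine ⟨⟨hc, by omega, hc, by omega, ?_⟩, trivial⟩
      have : c * x + c * (d - x) = c * (x + (d - x)) := by ring
      rw [this, show x + (d - x) = d by omega, hcd]
    · rintro ⟨a, x, b, y⟩ hv
      simp only [Finset.mem_filter, mem_V] at hv
      obtain ⟨⟨ha, hx, hb, hy, he⟩, hab⟩ := hv
      simp only [Prod.mk.injEq, true_and, and_true]
      omega
    · rintro ⟨⟨c, d⟩, x⟩ hq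
      simp only [Finset.mem_sigma, Nat.mem_divisorsAntidiagonal, Finset.mem_Ico] at hq
      obtain ⟨⟨hcd, hn⟩, h1, h2⟩ := hq
      dsimp only
      rw [show x + (d - x) = d by omega]
    · rintro ⟨a, x, b, y⟩ hv
      simp only [Finset.mem_filter, mem_V] at hv
      obtain ⟨-, hab⟩ := hv
      dsimp only
      rw [← hab]
  rw [step]
  refine Finset.sum_congr rfl (fun p hp => ?_)
  simp only [Nat.mem_divisorsAntidiagonal] at hp
  have hd : 0 < p.2 := by
    rcases Nat.eq_zero_or_pos p.2 with h | h
    · rw [h, Nat.mul_zero] at hp; omega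
    · exact h
  rw [Finset.sum_const, Nat.card_Ico]
  rw [nsmul_eq_mul]
  congr 1
  push_cast [Nat.cast_sub hd]
  ring

def sg (r m : ℕ) : ℚ := (ArithmeticFunction.sigma r m : ℚ)

lemma sg_div (r n : ℕ) : ∑ c ∈ n.divisors, (c : ℚ)^r = sg r n := by
  rw [sg, ArithmeticFunction.sigma_apply]
  push_cast
  rfl

lemma sumV_pow (n r s : ℕ) :
    ∑ v ∈ V n, (v.1 : ℚ) ^ r * (v.2.2.1 : ℚ) ^ s
      = ∑ k ∈ Finset.Ico 1 n, sg r k * sg s (n - k) := by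
  simp only [sg]
  have bij : ∑ v ∈ V n, (v.1 : ℚ) ^ r * (v.2.2.1 : ℚ) ^ s
      = ∑ q ∈ (Finset.Ico 1 n).sigma
          (fun k => k.divisorsAntidiagonal ×ˢ (n - k).divisorsAntidiagonal),
          (q.2.1.1 : ℚ) ^ r * (q.2.2.1 : ℚ) ^ s := by
    refine Finset.sum_nbij' (fun v => ⟨v.1 * v.2.1, ((v.1, v.2.1), (v.2.2.1, v.2.2.2))⟩)
      (fun q => (q.2.1.1, q.2.1.2, q.2.2.1, q.2.2.2)) ?_ ?_ ?_ ?_ ?_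
    · rintro ⟨a, x, b, y⟩ hv
      simp only [mem_V] at hv
      obtain ⟨ha, hx, hb, hy, he⟩ := hv
      have hax : 0 < a * x := Nat.mul_pos ha hx
      have hby : 0 < b * y := Nat.mul_pos hb hy
      simp only [Finset.mem_sigma, Finset.mem_Ico, Nat.mem_divisorsAntidiagonal,
        Finset.mem_product]
      exact ⟨⟨by omega, by omega⟩, ⟨trivial, by omega⟩, by omega, by omega⟩
    · rintro ⟨k, ⟨⟨a, x⟩, ⟨b, y⟩⟩⟩ hq
      simp only [Finset.mem_sigma, Finset.mem_Ico, Nat.mem_divisorsAntidiagonal,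
        Finset.mem_product] at hq
      obtain ⟨⟨hk1, hk2⟩, ⟨hax, _⟩, hby, hnk⟩ := hq
      simp only [mem_V]
      have ha : a ≠ 0 := fun h0 => by rw [h0, Nat.zero_mul] at hax; omega
      have hx : x ≠ 0 := fun h0 => by rw [h0, Nat.mul_zero] at hax; omega
      have hb : b ≠ 0 := fun h0 => by rw [h0, Nat.zero_mul] at hby; omega
      have hy : y ≠ 0 := fun h0 => by rw [h0, Nat.mul_zero] at hby; omega
      exact ⟨by omega, by omega, by omega, by omega, by omega⟩
    · rintro ⟨a, x, b, y⟩ _ ; rfl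
    · rintro ⟨k, ⟨⟨a, x⟩, ⟨b, y⟩⟩⟩ hq
      simp only [Finset.mem_sigma, Finset.mem_Ico, Nat.mem_divisorsAntidiagonal,
        Finset.mem_product] at hq
      obtain ⟨⟨hk1, hk2⟩, ⟨hax, _⟩, hby, hnk⟩ := hq
      dsimp only
      rw [hax]
    · rintro ⟨a, x, b, y⟩ _ ; rfl
  rw [bij, Finset.sum_sigma]
  refine Finset.sum_congr rfl (fun k hk => ?_)
  rw [Finset.sum_product]
  rw [sigma_cast r k, sigma_cast s (n - k), Finset.sum_mul_sum]
/-! ### Certificate polynomials -/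

def gAq (a b : ℕ) : ℚ := (2 : ℚ)*(b : ℚ)^4 + (-4 : ℚ)*(a : ℚ)*(b : ℚ)^3 + (3 : ℚ)*(a : ℚ)^2*(b : ℚ)^2

def tAq (a b : ℕ) : ℚ := (8 : ℚ)*(a : ℚ)*(b : ℚ)^3 + (8 : ℚ)*(a : ℚ)^3*(b : ℚ)

def gBq (a b : ℕ) : ℚ := (2 : ℚ)*(b : ℚ)^6 + (-6 : ℚ)*(a : ℚ)*(b : ℚ)^5 + (5 : ℚ)*(a : ℚ)^2*(b : ℚ)^4

def tBq (a b : ℕ) : ℚ := (12 : ℚ)*(a : ℚ)*(b : ℚ)^5 + (12 : ℚ)*(a : ℚ)^5*(b : ℚ)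

def gCq (a b : ℕ) : ℚ := (1 : ℚ)*(a : ℚ)^2*(b : ℚ)^4 + (-1 : ℚ)*(a : ℚ)^3*(b : ℚ)^3

def tCq (a b : ℕ) : ℚ := (4 : ℚ)*(a : ℚ)^3*(b : ℚ)^3

lemma certA (a b : ℕ) :
    gAq a (a + b) + gAq (b + a) a - gAq a b - gAq b a = tAq a b := by
  simp only [gAq, tAq]
  push_cast
  ring

lemma certB (a b : ℕ) :
    gBq a (a + b) + gBq (b + a) a - gBq a b - gBq b a = tBq a b := by
  simp only [gBq, tBq]
  push_cast
  ring

lemma certC (a b : ℕ) :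
    gCq a (a + b) + gCq (b + a) a - gCq a b - gCq b a = tCq a b := by
  simp only [gCq, tCq]
  push_cast
  ring

lemma innergA (c : ℕ) (hc : 1 ≤ c) :
    ∑ a ∈ Finset.Ico 1 c, gAq a (c - a) = ((-3 : ℚ)/10)*(c : ℚ) + (1 : ℚ)*(c : ℚ)^3 + (-1 : ℚ)*(c : ℚ)^4 + ((3 : ℚ)/10)*(c : ℚ)^5 := by
  have step : ∑ a ∈ Finset.Ico 1 c, gAq a (c - a)
      = ∑ a ∈ Finset.Ico 1 c, (((2 : ℚ)*(c : ℚ)^4) * (1 : ℚ) + ((-12 : ℚ)*(c : ℚ)^3) * (a : ℚ) + ((27 : ℚ)*(c : ℚ)^2) * (a : ℚ)^2 + ((-26 : ℚ)*(c : ℚ)) * (a : ℚ)^3 + ((9 : ℚ)) * (a : ℚ)^4) := by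
    refine Finset.sum_congr rfl (fun a ha => ?_)
    simp only [Finset.mem_Ico] at ha
    simp only [gAq]
    rw [Nat.cast_sub (by omega : a ≤ c)]
    ring
  rw [step]
  simp only [Finset.sum_add_distrib, ← Finset.mul_sum]
  rw [fh0 c hc, fh1 c hc, fh2 c hc, fh3 c hc, fh4 c hc]
  ring

lemma innertA (c : ℕ) (hc : 1 ≤ c) :
    ∑ a ∈ Finset.Ico 1 c, tAq a (c - a) = ((8 : ℚ)/15)*(c : ℚ) + ((-4 : ℚ)/3)*(c : ℚ)^3 + ((4 : ℚ)/5)*(c : ℚ)^5 := by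
  have step : ∑ a ∈ Finset.Ico 1 c, tAq a (c - a)
      = ∑ a ∈ Finset.Ico 1 c, (((8 : ℚ)*(c : ℚ)^3) * (a : ℚ) + ((-24 : ℚ)*(c : ℚ)^2) * (a : ℚ)^2 + ((32 : ℚ)*(c : ℚ)) * (a : ℚ)^3 + ((-16 : ℚ)) * (a : ℚ)^4) := by
    refine Finset.sum_congr rfl (fun a ha => ?_)
    simp only [Finset.mem_Ico] at ha
    simp only [tAq]
    rw [Nat.cast_sub (by omega : a ≤ c)]
    ring
  rw [step]
  simp only [Finset.sum_add_distrib, ← Finset.mul_sum]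
  rw [fh1 c hc, fh2 c hc, fh3 c hc, fh4 c hc]
  ring

lemma innergB (c : ℕ) (hc : 1 ≤ c) :
    ∑ a ∈ Finset.Ico 1 c, gBq a (c - a) = ((13 : ℚ)/42)*(c : ℚ) + (-1 : ℚ)*(c : ℚ)^3 + ((3 : ℚ)/2)*(c : ℚ)^5 + (-1 : ℚ)*(c : ℚ)^6 + ((4 : ℚ)/21)*(c : ℚ)^7 := by
  have step : ∑ a ∈ Finset.Ico 1 c, gBq a (c - a)
      = ∑ a ∈ Finset.Ico 1 c, (((2 : ℚ)*(c : ℚ)^6) * (1 : ℚ) + ((-18 : ℚ)*(c : ℚ)^5) * (a : ℚ) + ((65 : ℚ)*(c : ℚ)^4) * (a : ℚ)^2 + ((-120 : ℚ)*(c : ℚ)^3) * (a : ℚ)^3 + ((120 : ℚ)*(c : ℚ)^2) * (a : ℚ)^4 + ((-62 : ℚ)*(c : ℚ)) * (a : ℚ)^5 + ((13 : ℚ)) * (a : ℚ)^6) := by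
    refine Finset.sum_congr rfl (fun a ha => ?_)
    simp only [Finset.mem_Ico] at ha
    simp only [gBq]
    rw [Nat.cast_sub (by omega : a ≤ c)]
    ring
  rw [step]
  simp only [Finset.sum_add_distrib, ← Finset.mul_sum]
  rw [fh0 c hc, fh1 c hc, fh2 c hc, fh3 c hc, fh4 c hc, fh5 c hc, fh6 c hc]
  ring

lemma innertB (c : ℕ) (hc : 1 ≤ c) :
    ∑ a ∈ Finset.Ico 1 c, tBq a (c - a) = ((-4 : ℚ)/7)*(c : ℚ) + (2 : ℚ)*(c : ℚ)^3 + (-2 : ℚ)*(c : ℚ)^5 + ((4 : ℚ)/7)*(c : ℚ)^7 := by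
  have step : ∑ a ∈ Finset.Ico 1 c, tBq a (c - a)
      = ∑ a ∈ Finset.Ico 1 c, (((12 : ℚ)*(c : ℚ)^5) * (a : ℚ) + ((-60 : ℚ)*(c : ℚ)^4) * (a : ℚ)^2 + ((120 : ℚ)*(c : ℚ)^3) * (a : ℚ)^3 + ((-120 : ℚ)*(c : ℚ)^2) * (a : ℚ)^4 + ((72 : ℚ)*(c : ℚ)) * (a : ℚ)^5 + ((-24 : ℚ)) * (a : ℚ)^6) := by
    refine Finset.sum_congr rfl (fun a ha => ?_)
    simp only [Finset.mem_Ico] at ha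
    simp only [tBq]
    rw [Nat.cast_sub (by omega : a ≤ c)]
    ring
  rw [step]
  simp only [Finset.sum_add_distrib, ← Finset.mul_sum]
  rw [fh1 c hc, fh2 c hc, fh3 c hc, fh4 c hc, fh5 c hc, fh6 c hc]
  ring

lemma innergC (c : ℕ) (hc : 1 ≤ c) :
    ∑ a ∈ Finset.Ico 1 c, gCq a (c - a) = ((1 : ℚ)/21)*(c : ℚ) + ((-1 : ℚ)/20)*(c : ℚ)^3 + ((1 : ℚ)/420)*(c : ℚ)^7 := by
  have step : ∑ a ∈ Finset.Ico 1 c, gCq a (c - a)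
      = ∑ a ∈ Finset.Ico 1 c, (((1 : ℚ)*(c : ℚ)^4) * (a : ℚ)^2 + ((-5 : ℚ)*(c : ℚ)^3) * (a : ℚ)^3 + ((9 : ℚ)*(c : ℚ)^2) * (a : ℚ)^4 + ((-7 : ℚ)*(c : ℚ)) * (a : ℚ)^5 + ((2 : ℚ)) * (a : ℚ)^6) := by
    refine Finset.sum_congr rfl (fun a ha => ?_)
    simp only [Finset.mem_Ico] at ha
    simp only [gCq]
    rw [Nat.cast_sub (by omega : a ≤ c)]
    ring
  rw [step]
  simp only [Finset.sum_add_distrib, ← Finset.mul_sum]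
  rw [fh2 c hc, fh3 c hc, fh4 c hc, fh5 c hc, fh6 c hc]
  ring

lemma innertC (c : ℕ) (hc : 1 ≤ c) :
    ∑ a ∈ Finset.Ico 1 c, tCq a (c - a) = ((-2 : ℚ)/21)*(c : ℚ) + ((1 : ℚ)/15)*(c : ℚ)^3 + ((1 : ℚ)/35)*(c : ℚ)^7 := by
  have step : ∑ a ∈ Finset.Ico 1 c, tCq a (c - a)
      = ∑ a ∈ Finset.Ico 1 c, (((4 : ℚ)*(c : ℚ)^3) * (a : ℚ)^3 + ((-12 : ℚ)*(c : ℚ)^2) * (a : ℚ)^4 + ((12 : ℚ)*(c : ℚ)) * (a : ℚ)^5 + ((-4 : ℚ)) * (a : ℚ)^6) := by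
    refine Finset.sum_congr rfl (fun a ha => ?_)
    simp only [Finset.mem_Ico] at ha
    simp only [tCq]
    rw [Nat.cast_sub (by omega : a ≤ c)]
    ring
  rw [step]
  simp only [Finset.sum_add_distrib, ← Finset.mul_sum]
  rw [fh3 c hc, fh4 c hc, fh5 c hc, fh6 c hc]
  ring

/-! ### Evaluating the three convolutions -/

lemma sum_Ico_reflect (n : ℕ) (f : ℕ → ℚ) :
    ∑ k ∈ Finset.Ico 1 n, f k = ∑ k ∈ Finset.Ico 1 n, f (n - k) := by
  refine Finset.sum_nbij' (fun k => n - k) (fun k => n - k) ?_ ?_ ?_ ?_ ?_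
  · intro a ha; simp only [Finset.mem_Ico] at ha ⊢; omega
  · intro a ha; simp only [Finset.mem_Ico] at ha ⊢; omega
  · intro a ha; simp only [Finset.mem_Ico] at ha; omega
  · intro a ha; simp only [Finset.mem_Ico] at ha; omega
  · intro a ha; simp only [Finset.mem_Ico] at ha
    rw [show n - (n - a) = a by omega]

lemma dxygA (n : ℕ) :
    ∑ v ∈ (V n).filter (fun v => v.2.1 = v.2.2.2), gAq v.1 v.2.2.1 = ((-3 : ℚ)/10) * sg 1 n + (1 : ℚ) * sg 3 n + (-1 : ℚ) * sg 4 n + ((3 : ℚ)/10) * sg 5 n := by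
  rw [diag_xy n gAq]
  have step1 : ∑ p ∈ n.divisorsAntidiagonal, ∑ a ∈ Finset.Ico 1 p.1, gAq a (p.1 - a)
      = ∑ p ∈ n.divisorsAntidiagonal, ((fun c _ => ((-3 : ℚ)/10) * (c : ℚ)^1 + (1 : ℚ) * (c : ℚ)^3 + (-1 : ℚ) * (c : ℚ)^4 + ((3 : ℚ)/10) * (c : ℚ)^5) p.1 p.2) := by
    refine Finset.sum_congr rfl (fun p hp => ?_)
    simp only [Nat.mem_divisorsAntidiagonal] at hp
    have hc : 1 ≤ p.1 := by
      rcases Nat.eq_zero_or_pos p.1 with h | h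
      · rw [h, Nat.zero_mul] at hp; omega
      · exact h
    rw [innergA p.1 hc]
    ring
  rw [step1, Nat.sum_divisorsAntidiagonal (fun c _ => ((-3 : ℚ)/10) * (c : ℚ)^1 + (1 : ℚ) * (c : ℚ)^3 + (-1 : ℚ) * (c : ℚ)^4 + ((3 : ℚ)/10) * (c : ℚ)^5)]
  simp only [Finset.sum_add_distrib, ← Finset.mul_sum]
  rw [sg_div 1 n, sg_div 3 n, sg_div 4 n, sg_div 5 n]

lemma dxytA (n : ℕ) :
    ∑ v ∈ (V n).filter (fun v => v.2.1 = v.2.2.2), tAq v.1 v.2.2.1 = ((8 : ℚ)/15) * sg 1 n + ((-4 : ℚ)/3) * sg 3 n + ((4 : ℚ)/5) * sg 5 n := by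
  rw [diag_xy n tAq]
  have step1 : ∑ p ∈ n.divisorsAntidiagonal, ∑ a ∈ Finset.Ico 1 p.1, tAq a (p.1 - a)
      = ∑ p ∈ n.divisorsAntidiagonal, ((fun c _ => ((8 : ℚ)/15) * (c : ℚ)^1 + ((-4 : ℚ)/3) * (c : ℚ)^3 + ((4 : ℚ)/5) * (c : ℚ)^5) p.1 p.2) := by
    refine Finset.sum_congr rfl (fun p hp => ?_)
    simp only [Nat.mem_divisorsAntidiagonal] at hp
    have hc : 1 ≤ p.1 := by
      rcases Nat.eq_zero_or_pos p.1 with h | h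
      · rw [h, Nat.zero_mul] at hp; omega
      · exact h
    rw [innertA p.1 hc]
    ring
  rw [step1, Nat.sum_divisorsAntidiagonal (fun c _ => ((8 : ℚ)/15) * (c : ℚ)^1 + ((-4 : ℚ)/3) * (c : ℚ)^3 + ((4 : ℚ)/5) * (c : ℚ)^5)]
  simp only [Finset.sum_add_distrib, ← Finset.mul_sum]
  rw [sg_div 1 n, sg_div 3 n, sg_div 5 n]

lemma dxygB (n : ℕ) :
    ∑ v ∈ (V n).filter (fun v => v.2.1 = v.2.2.2), gBq v.1 v.2.2.1 = ((13 : ℚ)/42) * sg 1 n + (-1 : ℚ) * sg 3 n + ((3 : ℚ)/2) * sg 5 n + (-1 : ℚ) * sg 6 n + ((4 : ℚ)/21) * sg 7 n := by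
  rw [diag_xy n gBq]
  have step1 : ∑ p ∈ n.divisorsAntidiagonal, ∑ a ∈ Finset.Ico 1 p.1, gBq a (p.1 - a)
      = ∑ p ∈ n.divisorsAntidiagonal, ((fun c _ => ((13 : ℚ)/42) * (c : ℚ)^1 + (-1 : ℚ) * (c : ℚ)^3 + ((3 : ℚ)/2) * (c : ℚ)^5 + (-1 : ℚ) * (c : ℚ)^6 + ((4 : ℚ)/21) * (c : ℚ)^7) p.1 p.2) := by
    refine Finset.sum_congr rfl (fun p hp => ?_)
    simp only [Nat.mem_divisorsAntidiagonal] at hp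
    have hc : 1 ≤ p.1 := by
      rcases Nat.eq_zero_or_pos p.1 with h | h
      · rw [h, Nat.zero_mul] at hp; omega
      · exact h
    rw [innergB p.1 hc]
    ring
  rw [step1, Nat.sum_divisorsAntidiagonal (fun c _ => ((13 : ℚ)/42) * (c : ℚ)^1 + (-1 : ℚ) * (c : ℚ)^3 + ((3 : ℚ)/2) * (c : ℚ)^5 + (-1 : ℚ) * (c : ℚ)^6 + ((4 : ℚ)/21) * (c : ℚ)^7)]
  simp only [Finset.sum_add_distrib, ← Finset.mul_sum]
  rw [sg_div 1 n, sg_div 3 n, sg_div 5 n, sg_div 6 n, sg_div 7 n]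

lemma dxytB (n : ℕ) :
    ∑ v ∈ (V n).filter (fun v => v.2.1 = v.2.2.2), tBq v.1 v.2.2.1 = ((-4 : ℚ)/7) * sg 1 n + (2 : ℚ) * sg 3 n + (-2 : ℚ) * sg 5 n + ((4 : ℚ)/7) * sg 7 n := by
  rw [diag_xy n tBq]
  have step1 : ∑ p ∈ n.divisorsAntidiagonal, ∑ a ∈ Finset.Ico 1 p.1, tBq a (p.1 - a)
      = ∑ p ∈ n.divisorsAntidiagonal, ((fun c _ => ((-4 : ℚ)/7) * (c : ℚ)^1 + (2 : ℚ) * (c : ℚ)^3 + (-2 : ℚ) * (c : ℚ)^5 + ((4 : ℚ)/7) * (c : ℚ)^7) p.1 p.2) := by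
    refine Finset.sum_congr rfl (fun p hp => ?_)
    simp only [Nat.mem_divisorsAntidiagonal] at hp
    have hc : 1 ≤ p.1 := by
      rcases Nat.eq_zero_or_pos p.1 with h | h
      · rw [h, Nat.zero_mul] at hp; omega
      · exact h
    rw [innertB p.1 hc]
    ring
  rw [step1, Nat.sum_divisorsAntidiagonal (fun c _ => ((-4 : ℚ)/7) * (c : ℚ)^1 + (2 : ℚ) * (c : ℚ)^3 + (-2 : ℚ) * (c : ℚ)^5 + ((4 : ℚ)/7) * (c : ℚ)^7)]
  simp only [Finset.sum_add_distrib, ← Finset.mul_sum]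
  rw [sg_div 1 n, sg_div 3 n, sg_div 5 n, sg_div 7 n]

lemma dxygC (n : ℕ) :
    ∑ v ∈ (V n).filter (fun v => v.2.1 = v.2.2.2), gCq v.1 v.2.2.1 = ((1 : ℚ)/21) * sg 1 n + ((-1 : ℚ)/20) * sg 3 n + ((1 : ℚ)/420) * sg 7 n := by
  rw [diag_xy n gCq]
  have step1 : ∑ p ∈ n.divisorsAntidiagonal, ∑ a ∈ Finset.Ico 1 p.1, gCq a (p.1 - a)
      = ∑ p ∈ n.divisorsAntidiagonal, ((fun c _ => ((1 : ℚ)/21) * (c : ℚ)^1 + ((-1 : ℚ)/20) * (c : ℚ)^3 + ((1 : ℚ)/420) * (c : ℚ)^7) p.1 p.2) := by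
    refine Finset.sum_congr rfl (fun p hp => ?_)
    simp only [Nat.mem_divisorsAntidiagonal] at hp
    have hc : 1 ≤ p.1 := by
      rcases Nat.eq_zero_or_pos p.1 with h | h
      · rw [h, Nat.zero_mul] at hp; omega
      · exact h
    rw [innergC p.1 hc]
    ring
  rw [step1, Nat.sum_divisorsAntidiagonal (fun c _ => ((1 : ℚ)/21) * (c : ℚ)^1 + ((-1 : ℚ)/20) * (c : ℚ)^3 + ((1 : ℚ)/420) * (c : ℚ)^7)]
  simp only [Finset.sum_add_distrib, ← Finset.mul_sum]
  rw [sg_div 1 n, sg_div 3 n, sg_div 7 n]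

lemma dxytC (n : ℕ) :
    ∑ v ∈ (V n).filter (fun v => v.2.1 = v.2.2.2), tCq v.1 v.2.2.1 = ((-2 : ℚ)/21) * sg 1 n + ((1 : ℚ)/15) * sg 3 n + ((1 : ℚ)/35) * sg 7 n := by
  rw [diag_xy n tCq]
  have step1 : ∑ p ∈ n.divisorsAntidiagonal, ∑ a ∈ Finset.Ico 1 p.1, tCq a (p.1 - a)
      = ∑ p ∈ n.divisorsAntidiagonal, ((fun c _ => ((-2 : ℚ)/21) * (c : ℚ)^1 + ((1 : ℚ)/15) * (c : ℚ)^3 + ((1 : ℚ)/35) * (c : ℚ)^7) p.1 p.2) := by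
    refine Finset.sum_congr rfl (fun p hp => ?_)
    simp only [Nat.mem_divisorsAntidiagonal] at hp
    have hc : 1 ≤ p.1 := by
      rcases Nat.eq_zero_or_pos p.1 with h | h
      · rw [h, Nat.zero_mul] at hp; omega
      · exact h
    rw [innertC p.1 hc]
    ring
  rw [step1, Nat.sum_divisorsAntidiagonal (fun c _ => ((-2 : ℚ)/21) * (c : ℚ)^1 + ((1 : ℚ)/15) * (c : ℚ)^3 + ((1 : ℚ)/35) * (c : ℚ)^7)]
  simp only [Finset.sum_add_distrib, ← Finset.mul_sum]
  rw [sg_div 1 n, sg_div 3 n, sg_div 7 n]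

lemma dabgA (n : ℕ) :
    ∑ v ∈ (V n).filter (fun v => v.1 = v.2.2.1), gAq v.1 v.2.2.1
      = (n : ℚ) * sg 3 n - sg 4 n := by
  rw [diag_ab n gAq]
  have step1 : ∑ p ∈ n.divisorsAntidiagonal, ((p.2 : ℚ) - 1) * gAq p.1 p.1
      = ∑ p ∈ n.divisorsAntidiagonal,
          ((fun c _ => (n : ℚ) * (c : ℚ)^3 + (-1 : ℚ) * (c : ℚ)^4) p.1 p.2) := by
    refine Finset.sum_congr rfl (fun p hp => ?_)
    simp only [Nat.mem_divisorsAntidiagonal] at hp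
    have h : (p.1 : ℚ) * (p.2 : ℚ) = (n : ℚ) := by exact_mod_cast hp.1
    simp only [gAq]
    linear_combination ((p.1 : ℚ))^3 * h
  rw [step1, Nat.sum_divisorsAntidiagonal (fun c _ => (n : ℚ) * (c : ℚ)^3 + (-1 : ℚ) * (c : ℚ)^4)]
  simp only [Finset.sum_add_distrib, ← Finset.mul_sum]
  rw [sg_div 3 n, sg_div 4 n]
  ring

lemma dabgB (n : ℕ) :
    ∑ v ∈ (V n).filter (fun v => v.1 = v.2.2.1), gBq v.1 v.2.2.1
      = (n : ℚ) * sg 5 n - sg 6 n := by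
  rw [diag_ab n gBq]
  have step1 : ∑ p ∈ n.divisorsAntidiagonal, ((p.2 : ℚ) - 1) * gBq p.1 p.1
      = ∑ p ∈ n.divisorsAntidiagonal,
          ((fun c _ => (n : ℚ) * (c : ℚ)^5 + (-1 : ℚ) * (c : ℚ)^6) p.1 p.2) := by
    refine Finset.sum_congr rfl (fun p hp => ?_)
    simp only [Nat.mem_divisorsAntidiagonal] at hp
    have h : (p.1 : ℚ) * (p.2 : ℚ) = (n : ℚ) := by exact_mod_cast hp.1
    simp only [gBq]
    linear_combination ((p.1 : ℚ))^5 * h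
  rw [step1, Nat.sum_divisorsAntidiagonal (fun c _ => (n : ℚ) * (c : ℚ)^5 + (-1 : ℚ) * (c : ℚ)^6)]
  simp only [Finset.sum_add_distrib, ← Finset.mul_sum]
  rw [sg_div 5 n, sg_div 6 n]
  ring

lemma dabgC (n : ℕ) :
    ∑ v ∈ (V n).filter (fun v => v.1 = v.2.2.1), gCq v.1 v.2.2.1 = 0 := by
  rw [diag_ab n gCq]
  refine Finset.sum_eq_zero (fun p hp => ?_)
  simp only [gCq]
  ring

lemma convA (n : ℕ) :
    (16 : ℚ) * ∑ k ∈ Finset.Ico 1 n, sg 1 k * sg 3 (n - k) = (-2 : ℚ) * ((n : ℚ) * sg 3 n) + ((-1 : ℚ)/15) * (sg 1 n) + ((2 : ℚ)/3) * (sg 3 n) + ((7 : ℚ)/5) * (sg 5 n) := by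
  have M := master n gAq
  have certsum : ∑ v ∈ (V n).filter (fun v => v.2.2.2 < v.2.1),
      (gAq v.1 (v.1 + v.2.2.1) + gAq (v.2.2.1 + v.1) v.1 - gAq v.1 v.2.2.1 - gAq v.2.2.1 v.1)
      = ∑ v ∈ (V n).filter (fun v => v.2.2.2 < v.2.1), tAq v.1 v.2.2.1 :=
    Finset.sum_congr rfl (fun v _ => certA v.1 v.2.2.1)
  rw [certsum] at M
  have split1 := Finset.sum_filter_add_sum_filter_not (V n) (fun v => v.2.1 = v.2.2.2)
    (fun v => tAq v.1 v.2.2.1)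
  have split2 := Finset.sum_filter_add_sum_filter_not
    ((V n).filter (fun v => ¬(v.2.1 = v.2.2.2))) (fun v => v.2.2.2 < v.2.1)
    (fun v => tAq v.1 v.2.2.1)
  rw [filter_gt_eq, filter_lt_eq] at split2
  have swap : ∑ v ∈ (V n).filter (fun v => v.2.1 < v.2.2.2), tAq v.1 v.2.2.1
      = ∑ v ∈ (V n).filter (fun v => v.2.2.2 < v.2.1), tAq v.1 v.2.2.1 := by
    rw [sum_rho n (fun v => v.2.1 < v.2.2.2) (fun v => tAq v.1 v.2.2.1)]
    have e1 : ((V n).filter (fun v => (rho v).2.1 < (rho v).2.2.2))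
        = (V n).filter (fun v => v.2.2.2 < v.2.1) := by
      apply Finset.filter_congr
      intro v _
      exact Iff.rfl
    rw [e1]
    refine Finset.sum_congr rfl (fun v _ => ?_)
    simp only [rho, tAq]
    ring
  have bridge : ∑ v ∈ V n, tAq v.1 v.2.2.1
      = (16 : ℚ) * ∑ k ∈ Finset.Ico 1 n, sg 1 k * sg 3 (n - k) := by
    have h1 := sumV_pow n 1 3
    have h2 := sumV_pow n 3 1
    have refl2 : ∑ k ∈ Finset.Ico 1 n, sg 3 k * sg 1 (n - k)
        = ∑ k ∈ Finset.Ico 1 n, sg 1 k * sg 3 (n - k) := by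
      rw [sum_Ico_reflect n (fun k => sg 3 k * sg 1 (n - k))]
      refine Finset.sum_congr rfl (fun k hk => ?_)
      simp only [Finset.mem_Ico] at hk
      rw [show n - (n - k) = k by omega]
      ring
    calc ∑ v ∈ V n, tAq v.1 v.2.2.1
        = ∑ v ∈ V n, ((v.1 : ℚ)^1 * (v.2.2.1 : ℚ)^3 * (8 : ℚ)
            + (v.1 : ℚ)^3 * (v.2.2.1 : ℚ)^1 * (8 : ℚ)) := by
          refine Finset.sum_congr rfl (fun v _ => ?_) ; simp only [tAq] ; ring
      _ = (∑ v ∈ V n, (v.1 : ℚ)^1 * (v.2.2.1 : ℚ)^3) * (8 : ℚ)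
            + (∑ v ∈ V n, (v.1 : ℚ)^3 * (v.2.2.1 : ℚ)^1) * (8 : ℚ) := by
          rw [Finset.sum_add_distrib, ← Finset.sum_mul, ← Finset.sum_mul]
      _ = _ := by
          rw [h1, h2, refl2]
          ring
  have hdxyT := dxytA n
  have hdxyG := dxygA n
  have hdabG := dabgA n
  linarith [M, split1, split2, swap, bridge, hdxyT, hdxyG, hdabG]

lemma convB (n : ℕ) :
    (24 : ℚ) * ∑ k ∈ Finset.Ico 1 n, sg 1 k * sg 5 (n - k) = (-2 : ℚ) * ((n : ℚ) * sg 5 n) + ((1 : ℚ)/21) * (sg 1 n) + (1 : ℚ) * (sg 5 n) + ((20 : ℚ)/21) * (sg 7 n) := by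
  have M := master n gBq
  have certsum : ∑ v ∈ (V n).filter (fun v => v.2.2.2 < v.2.1),
      (gBq v.1 (v.1 + v.2.2.1) + gBq (v.2.2.1 + v.1) v.1 - gBq v.1 v.2.2.1 - gBq v.2.2.1 v.1)
      = ∑ v ∈ (V n).filter (fun v => v.2.2.2 < v.2.1), tBq v.1 v.2.2.1 :=
    Finset.sum_congr rfl (fun v _ => certB v.1 v.2.2.1)
  rw [certsum] at M
  have split1 := Finset.sum_filter_add_sum_filter_not (V n) (fun v => v.2.1 = v.2.2.2)
    (fun v => tBq v.1 v.2.2.1)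
  have split2 := Finset.sum_filter_add_sum_filter_not
    ((V n).filter (fun v => ¬(v.2.1 = v.2.2.2))) (fun v => v.2.2.2 < v.2.1)
    (fun v => tBq v.1 v.2.2.1)
  rw [filter_gt_eq, filter_lt_eq] at split2
  have swap : ∑ v ∈ (V n).filter (fun v => v.2.1 < v.2.2.2), tBq v.1 v.2.2.1
      = ∑ v ∈ (V n).filter (fun v => v.2.2.2 < v.2.1), tBq v.1 v.2.2.1 := by
    rw [sum_rho n (fun v => v.2.1 < v.2.2.2) (fun v => tBq v.1 v.2.2.1)]
    have e1 : ((V n).filter (fun v => (rho v).2.1 < (rho v).2.2.2))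
        = (V n).filter (fun v => v.2.2.2 < v.2.1) := by
      apply Finset.filter_congr
      intro v _
      exact Iff.rfl
    rw [e1]
    refine Finset.sum_congr rfl (fun v _ => ?_)
    simp only [rho, tBq]
    ring
  have bridge : ∑ v ∈ V n, tBq v.1 v.2.2.1
      = (24 : ℚ) * ∑ k ∈ Finset.Ico 1 n, sg 1 k * sg 5 (n - k) := by
    have h1 := sumV_pow n 1 5
    have h2 := sumV_pow n 5 1
    have refl2 : ∑ k ∈ Finset.Ico 1 n, sg 5 k * sg 1 (n - k)
        = ∑ k ∈ Finset.Ico 1 n, sg 1 k * sg 5 (n - k) := by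
      rw [sum_Ico_reflect n (fun k => sg 5 k * sg 1 (n - k))]
      refine Finset.sum_congr rfl (fun k hk => ?_)
      simp only [Finset.mem_Ico] at hk
      rw [show n - (n - k) = k by omega]
      ring
    calc ∑ v ∈ V n, tBq v.1 v.2.2.1
        = ∑ v ∈ V n, ((v.1 : ℚ)^1 * (v.2.2.1 : ℚ)^5 * (12 : ℚ)
            + (v.1 : ℚ)^5 * (v.2.2.1 : ℚ)^1 * (12 : ℚ)) := by
          refine Finset.sum_congr rfl (fun v _ => ?_) ; simp only [tBq] ; ring
      _ = (∑ v ∈ V n, (v.1 : ℚ)^1 * (v.2.2.1 : ℚ)^5) * (12 : ℚ)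
            + (∑ v ∈ V n, (v.1 : ℚ)^5 * (v.2.2.1 : ℚ)^1) * (12 : ℚ) := by
          rw [Finset.sum_add_distrib, ← Finset.sum_mul, ← Finset.sum_mul]
      _ = _ := by
          rw [h1, h2, refl2]
          ring
  have hdxyT := dxytB n
  have hdxyG := dxygB n
  have hdabG := dabgB n
  linarith [M, split1, split2, swap, bridge, hdxyT, hdxyG, hdabG]

lemma convC (n : ℕ) :
    (4 : ℚ) * ∑ k ∈ Finset.Ico 1 n, sg 3 k * sg 3 (n - k) = ((-1 : ℚ)/30) * (sg 3 n) + ((1 : ℚ)/30) * (sg 7 n) := by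
  have M := master n gCq
  have certsum : ∑ v ∈ (V n).filter (fun v => v.2.2.2 < v.2.1),
      (gCq v.1 (v.1 + v.2.2.1) + gCq (v.2.2.1 + v.1) v.1 - gCq v.1 v.2.2.1 - gCq v.2.2.1 v.1)
      = ∑ v ∈ (V n).filter (fun v => v.2.2.2 < v.2.1), tCq v.1 v.2.2.1 :=
    Finset.sum_congr rfl (fun v _ => certC v.1 v.2.2.1)
  rw [certsum] at M
  have split1 := Finset.sum_filter_add_sum_filter_not (V n) (fun v => v.2.1 = v.2.2.2)
    (fun v => tCq v.1 v.2.2.1)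
  have split2 := Finset.sum_filter_add_sum_filter_not
    ((V n).filter (fun v => ¬(v.2.1 = v.2.2.2))) (fun v => v.2.2.2 < v.2.1)
    (fun v => tCq v.1 v.2.2.1)
  rw [filter_gt_eq, filter_lt_eq] at split2
  have swap : ∑ v ∈ (V n).filter (fun v => v.2.1 < v.2.2.2), tCq v.1 v.2.2.1
      = ∑ v ∈ (V n).filter (fun v => v.2.2.2 < v.2.1), tCq v.1 v.2.2.1 := by
    rw [sum_rho n (fun v => v.2.1 < v.2.2.2) (fun v => tCq v.1 v.2.2.1)]
    have e1 : ((V n).filter (fun v => (rho v).2.1 < (rho v).2.2.2))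
        = (V n).filter (fun v => v.2.2.2 < v.2.1) := by
      apply Finset.filter_congr
      intro v _
      exact Iff.rfl
    rw [e1]
    refine Finset.sum_congr rfl (fun v _ => ?_)
    simp only [rho, tCq]
    ring
  have bridge : ∑ v ∈ V n, tCq v.1 v.2.2.1
      = (4 : ℚ) * ∑ k ∈ Finset.Ico 1 n, sg 3 k * sg 3 (n - k) := by
    have h1 := sumV_pow n 3 3
    calc ∑ v ∈ V n, tCq v.1 v.2.2.1
        = ∑ v ∈ V n, ((v.1 : ℚ)^3 * (v.2.2.1 : ℚ)^3 * (4 : ℚ)) := by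
          refine Finset.sum_congr rfl (fun v _ => ?_) ; simp only [tCq] ; ring
      _ = (∑ v ∈ V n, (v.1 : ℚ)^3 * (v.2.2.1 : ℚ)^3) * (4 : ℚ) := by
          rw [← Finset.sum_mul]
      _ = _ := by rw [h1] ; ring
  have hdxyT := dxytC n
  have hdxyG := dxygC n
  have hdabG := dabgC n
  linarith [M, split1, split2, swap, bridge, hdxyT, hdxyG, hdabG]

/-! ### The theta operator on power series -/

open PowerSeries

noncomputable def theta (f : ℚ⟦X⟧) : ℚ⟦X⟧ := PowerSeries.mk fun n => (n : ℚ) * coeff n f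

@[simp] lemma coeff_theta (n : ℕ) (f : ℚ⟦X⟧) : coeff n (theta f) = (n : ℚ) * coeff n f := by
  simp [theta]

lemma theta_mul (f g : ℚ⟦X⟧) : theta (f * g) = theta f * g + f * theta g := by
  ext n
  simp only [theta, coeff_mk, PowerSeries.coeff_mul, map_add, Finset.mul_sum]
  rw [← Finset.sum_add_distrib]
  refine Finset.sum_congr rfl (fun p hp => ?_)
  rw [Finset.HasAntidiagonal.mem_antidiagonal] at hp
  have hc : (p.1 : ℚ) + (p.2 : ℚ) = (n : ℚ) := by exact_mod_cast congrArg (Nat.cast : ℕ → ℚ) hp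
  rw [← hc]
  ring

lemma theta_add (f g : ℚ⟦X⟧) : theta (f + g) = theta f + theta g := by
  ext n; simp only [theta, coeff_mk, map_add]; ring

lemma theta_sub (f g : ℚ⟦X⟧) : theta (f - g) = theta f - theta g := by
  ext n; simp only [theta, coeff_mk, map_sub]; ring

@[simp] lemma theta_one : theta (1 : ℚ⟦X⟧) = 0 := by
  ext n
  simp only [theta, coeff_mk, PowerSeries.coeff_one, map_zero]
  by_cases h : n = 0 <;> simp [h]

@[simp] lemma theta_X : theta (X : ℚ⟦X⟧) = X := by
  ext n
  simp only [theta, coeff_mk, PowerSeries.coeff_X]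
  by_cases h : n = 1 <;> simp [h]

@[simp] lemma theta_X_pow (i : ℕ) : theta ((X : ℚ⟦X⟧) ^ i) = (i : ℚ) • (X : ℚ⟦X⟧)^i := by
  ext n
  simp only [theta, coeff_mk, PowerSeries.coeff_X_pow, PowerSeries.coeff_smul, smul_eq_mul]
  by_cases h : n = i <;> simp [h]

lemma theta_pow (k : ℕ) (g : ℚ⟦X⟧) :
    theta (g ^ (k + 1)) = PowerSeries.C ((k + 1 : ℕ) : ℚ) * g ^ k * theta g := by
  induction k with
  | zero => simp
  | succ k ih =>
    rw [pow_succ, theta_mul, ih]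
    have hcast : ((k + 1 + 1 : ℕ) : ℚ) = ((k + 1 : ℕ) : ℚ) + 1 := by push_cast; ring
    rw [hcast, map_add, map_one]
    ring

/-! ### Eisenstein-like series -/

noncomputable def Pser : ℚ⟦X⟧ := PowerSeries.mk fun m => if m = 0 then 1 else -24 * sg 1 m
noncomputable def Qser : ℚ⟦X⟧ := PowerSeries.mk fun m => if m = 0 then 1 else 240 * sg 3 m
noncomputable def Rser : ℚ⟦X⟧ := PowerSeries.mk fun m => if m = 0 then 1 else -504 * sg 5 m

lemma coeff_mul_split (f g : ℚ⟦X⟧) (m : ℕ) (hm : 1 ≤ m) :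
    coeff m (f * g) = coeff 0 f * coeff m g
      + (∑ k ∈ Finset.Ico 1 m, coeff k f * coeff (m - k) g)
      + coeff m f * coeff 0 g := by
  rw [PowerSeries.coeff_mul, Finset.Nat.sum_antidiagonal_eq_sum_range_succ_mk,
    Finset.sum_range_succ, Finset.range_eq_Ico, Finset.sum_eq_sum_Ico_succ_bot hm]
  simp only [Nat.sub_self, Nat.sub_zero]
  try ring

/-! ### The two Ramanujan differential identities -/

lemma idB : PowerSeries.C 3 * theta Qser = Pser * Qser - Rser := by
  ext m
  rcases Nat.eq_zero_or_pos m with hm | hm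
  · subst hm
    simp [Pser, Qser, Rser, PowerSeries.coeff_mul, PowerSeries.coeff_C_mul]
  · have h0 : m ≠ 0 := by omega
    rw [map_sub, PowerSeries.coeff_C_mul, coeff_theta, coeff_mul_split Pser Qser m hm]
    simp only [Pser, Qser, Rser, coeff_mk, if_neg h0]
    simp only [if_true]
    have hsum : ∑ k ∈ Finset.Ico 1 m,
        (if k = 0 then (1 : ℚ) else -24 * sg 1 k) * (if m - k = 0 then (1 : ℚ) else 240 * sg 3 (m - k))
        = -5760 * ∑ k ∈ Finset.Ico 1 m, sg 1 k * sg 3 (m - k) := by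
      rw [Finset.mul_sum]
      refine Finset.sum_congr rfl (fun k hk => ?_)
      simp only [Finset.mem_Ico] at hk
      rw [if_neg (by omega), if_neg (by omega)]
      ring
    rw [hsum]
    have h := convA m
    linear_combination (360 : ℚ) * h

lemma idC : PowerSeries.C 2 * theta Rser = Pser * Rser - Qser * Qser := by
  ext m
  rcases Nat.eq_zero_or_pos m with hm | hm
  · subst hm
    simp [Pser, Qser, Rser, PowerSeries.coeff_mul, PowerSeries.coeff_C_mul]
  · have h0 : m ≠ 0 := by omega
    rw [map_sub, PowerSeries.coeff_C_mul, coeff_theta, coeff_mul_split Pser Rser m hm,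
      coeff_mul_split Qser Qser m hm]
    simp only [Pser, Qser, Rser, coeff_mk, if_neg h0]
    simp only [if_true]
    have hsum1 : ∑ k ∈ Finset.Ico 1 m,
        (if k = 0 then (1 : ℚ) else -24 * sg 1 k) * (if m - k = 0 then (1 : ℚ) else -504 * sg 5 (m - k))
        = 12096 * ∑ k ∈ Finset.Ico 1 m, sg 1 k * sg 5 (m - k) := by
      rw [Finset.mul_sum]
      refine Finset.sum_congr rfl (fun k hk => ?_)
      simp only [Finset.mem_Ico] at hk
      rw [if_neg (by omega), if_neg (by omega)]
      ring
    have hsum2 : ∑ k ∈ Finset.Ico 1 m,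
        (if k = 0 then (1 : ℚ) else 240 * sg 3 k) * (if m - k = 0 then (1 : ℚ) else 240 * sg 3 (m - k))
        = 57600 * ∑ k ∈ Finset.Ico 1 m, sg 3 k * sg 3 (m - k) := by
      rw [Finset.mul_sum]
      refine Finset.sum_congr rfl (fun k hk => ?_)
      simp only [Finset.mem_Ico] at hk
      rw [if_neg (by omega), if_neg (by omega)]
      ring
    rw [hsum1, hsum2]
    have hB := convB m
    have hC := convC m
    linear_combination (-504 : ℚ) * hB + (14400 : ℚ) * hC

/-! ### The eta product and its logarithmic derivative -/

noncomputable def Tser (i : ℕ) : ℚ⟦X⟧ :=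
  PowerSeries.mk fun k => if i ∣ k ∧ 1 ≤ k then (i : ℚ) else 0

lemma T_mul (i : ℕ) (hi : 1 ≤ i) :
    Tser i * (1 - X ^ i) = PowerSeries.C (i : ℚ) * X ^ i := by
  ext n
  rw [mul_sub, mul_one, map_sub, PowerSeries.coeff_mul_X_pow']
  simp only [Tser, coeff_mk, PowerSeries.coeff_C_mul, PowerSeries.coeff_X_pow]
  by_cases h1 : i ≤ n
  · rw [if_pos h1]
    by_cases h2 : n = i
    · subst h2
      rw [if_pos ⟨dvd_refl n, by omega⟩, if_pos rfl,
        if_neg (fun hc : n ∣ n - n ∧ 1 ≤ n - n => absurd hc.2 (by omega))]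
      ring
    · have h3 : i < n := by omega
      by_cases hd : i ∣ n
      · have hd2 : i ∣ n - i := Nat.dvd_sub hd (dvd_refl i)
        rw [if_pos ⟨hd, by omega⟩, if_pos ⟨hd2, by omega⟩, if_neg h2]
        ring
      · have hd2 : ¬ i ∣ n - i := fun hc => hd (by
          have h4 := Nat.dvd_add hc (dvd_refl i)
          rwa [Nat.sub_add_cancel h1] at h4)
        rw [if_neg (fun hc => hd hc.1), if_neg (fun hc => hd2 hc.1), if_neg h2]
        ring
  · rw [if_neg h1, if_neg (fun hc : i ∣ n ∧ 1 ≤ n => h1 (Nat.le_of_dvd (by omega) hc.1)),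
      if_neg (show ¬ n = i by omega)]
    ring

noncomputable def Sig (N : ℕ) : ℚ⟦X⟧ := ∑ i ∈ Finset.range N, Tser (i + 1)

lemma coeff_Sig_zero (N : ℕ) : coeff 0 (Sig N) = 0 := by
  simp [Sig, Tser]

lemma coeff_Sig (N l : ℕ) (h1 : 1 ≤ l) (h2 : l ≤ N) : coeff l (Sig N) = sg 1 l := by
  rw [Sig, map_sum]
  simp only [Tser, coeff_mk]
  have step : ∑ i ∈ Finset.range N, (if (i + 1) ∣ l ∧ 1 ≤ l then ((i + 1 : ℕ) : ℚ) else 0)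
      = ∑ d ∈ Finset.Ico 1 (N + 1), (if d ∣ l then (d : ℚ) else 0) := by
    refine Finset.sum_nbij' (fun i => i + 1) (fun d => d - 1) ?_ ?_ ?_ ?_ ?_
    · intro a ha; simp only [Finset.mem_range] at ha; simp only [Finset.mem_Ico]; omega
    · intro a ha; simp only [Finset.mem_Ico] at ha; simp only [Finset.mem_range]; omega
    · intro a _; omega
    · intro a ha; simp only [Finset.mem_Ico] at ha; omega
    · intro a _
      by_cases hd : (a + 1) ∣ l
      · rw [if_pos ⟨hd, h1⟩, if_pos hd]
      · rw [if_neg (fun hc => hd hc.1), if_neg hd]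
  rw [step, Finset.sum_ite, Finset.sum_const_zero, add_zero]
  have hset : (Finset.Ico 1 (N + 1)).filter (· ∣ l) = l.divisors := by
    ext d
    simp only [Finset.mem_filter, Finset.mem_Ico, Nat.mem_divisors]
    constructor
    · rintro ⟨⟨hd1, hd2⟩, hdvd⟩; exact ⟨hdvd, by omega⟩
    · rintro ⟨hdvd, hl⟩
      have := Nat.le_of_dvd (by omega) hdvd
      have := Nat.pos_of_dvd_of_pos hdvd (by omega)
      exact ⟨⟨by omega, by omega⟩, hdvd⟩
  rw [hset]
  have := sg_div 1 l
  simp only [pow_one] at this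
  rw [this]

lemma one_sub_pow (Z : ℚ⟦X⟧) (k : ℕ) : ∃ g : ℚ⟦X⟧, (1 - Z) ^ k = 1 + Z * g := by
  induction k with
  | zero => exact ⟨0, by simp⟩
  | succ k ih =>
    obtain ⟨g, hg⟩ := ih
    refine ⟨g - 1 - Z * g, ?_⟩
    rw [pow_succ, hg]
    ring

noncomputable def Fser (N : ℕ) : ℚ⟦X⟧ := X * ∏ i ∈ Finset.range N, (1 - X ^ (i + 1)) ^ 24

lemma thetaF (N : ℕ) : theta (Fser N) = Fser N * (1 - PowerSeries.C 24 * Sig N) := by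
  induction N with
  | zero => simp [Fser, Sig]
  | succ N ih =>
    have hF : Fser (N + 1) = Fser N * (1 - X ^ (N + 1)) ^ 24 := by
      rw [Fser, Fser, Finset.prod_range_succ]
      ring
    have h23 : (24 : ℕ) = 23 + 1 := rfl
    have hu : theta ((1 - X ^ (N + 1)) ^ 24)
        = PowerSeries.C 24 * (1 - X ^ (N + 1)) ^ 23 * theta (1 - X ^ (N + 1)) := by
      rw [h23, theta_pow 23]
      norm_num
    have hth : theta (1 - (X : ℚ⟦X⟧) ^ (N + 1))
        = - (PowerSeries.C ((N + 1 : ℕ) : ℚ) * X ^ (N + 1)) := by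
      rw [theta_sub, theta_one, theta_X_pow]
      rw [PowerSeries.smul_eq_C_mul]
      ring
    have hT := T_mul (N + 1) (by omega)
    have hSig : Sig (N + 1) = Sig N + Tser (N + 1) := by
      rw [Sig, Sig, Finset.sum_range_succ]
    rw [hF, theta_mul, ih, hu, hth, hSig]
    calc Fser N * (1 - PowerSeries.C 24 * Sig N) * (1 - X ^ (N + 1)) ^ 24 +
          Fser N * (PowerSeries.C 24 * (1 - X ^ (N + 1)) ^ 23 *
            -(PowerSeries.C ((N + 1 : ℕ) : ℚ) * X ^ (N + 1)))
        = Fser N * (1 - PowerSeries.C 24 * Sig N) * (1 - X ^ (N + 1)) ^ 24 -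
          PowerSeries.C 24 * Fser N * (1 - X ^ (N + 1)) ^ 23 *
            (Tser (N + 1) * (1 - X ^ (N + 1))) := by rw [hT]; ring
      _ = Fser N * (1 - X ^ (N + 1)) ^ 24 *
            (1 - PowerSeries.C 24 * (Sig N + Tser (N + 1))) := by ring

/-! ### Stability and the tau recursion -/

lemma coeff_F_stable (m N M : ℕ) (h1 : m ≤ N) (h2 : N ≤ M) :
    coeff m (Fser M) = coeff m (Fser N) := by
  induction M with
  | zero => have : N = 0 := by omega
            subst this; rfl
  | succ M ih =>
    rcases Nat.eq_or_lt_of_le h2 with he | hlt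
    · subst he; rfl
    · have hMN : N ≤ M := by omega
      rw [← ih hMN]
      have hF : Fser (M + 1) = Fser M * (1 - X ^ (M + 1)) ^ 24 := by
        rw [Fser, Fser, Finset.prod_range_succ]; ring
      obtain ⟨g, hg⟩ := one_sub_pow ((X : ℚ⟦X⟧) ^ (M + 1)) 24
      rw [hF, hg, mul_add, mul_one, map_add]
      have hc : Fser M * (X ^ (M + 1) * g) = (Fser M * g) * X ^ (M + 1) := by ring
      rw [hc, PowerSeries.coeff_mul_X_pow', if_neg (show ¬ M + 1 ≤ m by omega)]
      simp

noncomputable def tq (m : ℕ) : ℚ := coeff m (Fser m)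

lemma coeff_F_eq_tq (k N : ℕ) (h : k ≤ N) : coeff k (Fser N) = tq k :=
  coeff_F_stable k k N (le_refl k) h

lemma c0mul (f g : ℚ⟦X⟧) : coeff 0 (f * g) = coeff 0 f * coeff 0 g := by
  simp [PowerSeries.coeff_zero_eq_constantCoeff]

lemma coeff_F_zero (N : ℕ) : coeff 0 (Fser N) = 0 := by
  rw [Fser, c0mul]
  simp

lemma tq_zero : tq 0 = 0 := coeff_F_zero 0

lemma tq_one : tq 1 = 1 := by
  have hF : Fser 1 = X * (1 - X ^ 1) ^ 24 := by
    rw [Fser, Finset.prod_range_one]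
  obtain ⟨g, hg⟩ := one_sub_pow ((X : ℚ⟦X⟧) ^ 1) 24
  rw [tq, hF, hg, mul_add, mul_one, map_add, PowerSeries.coeff_one_X]
  have hc : (X : ℚ⟦X⟧) * (X ^ 1 * g) = (X * g) * X ^ 1 := by ring
  rw [hc, PowerSeries.coeff_mul_X_pow', if_pos (le_refl 1)]
  rw [c0mul]
  simp

lemma tq_rec (m : ℕ) (hm : 1 ≤ m) :
    (m : ℚ) * tq m = tq m - 24 * ∑ k ∈ Finset.Ico 1 m, sg 1 (m - k) * tq k := by
  have h := congrArg (coeff m) (thetaF m)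
  rw [coeff_theta, mul_sub, mul_one, map_sub] at h
  have h2 : Fser m * (PowerSeries.C 24 * Sig m) = PowerSeries.C 24 * (Fser m * Sig m) := by
    ring
  rw [h2, PowerSeries.coeff_C_mul] at h
  have h3 : coeff m (Fser m * Sig m) = ∑ k ∈ Finset.Ico 1 m, sg 1 (m - k) * tq k := by
    rw [coeff_mul_split _ _ m hm, coeff_F_zero, coeff_Sig_zero]
    simp only [zero_mul, mul_zero, add_zero, zero_add]
    refine Finset.sum_congr rfl (fun k hk => ?_)
    simp only [Finset.mem_Ico] at hk
    rw [coeff_Sig m (m - k) (by omega) (by omega), coeff_F_eq_tq k m (by omega)]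
    ring
  rw [h3, coeff_F_eq_tq m m (le_refl m)] at h
  linarith [h]

/-! ### The Eisenstein side -/

noncomputable def Eser : ℚ⟦X⟧ := Qser * Qser * Qser - Rser * Rser

noncomputable def dq (m : ℕ) : ℚ := coeff m Eser

lemma thetaE : theta Eser = Pser * Eser := by
  have c3 : (PowerSeries.C 3 : ℚ⟦X⟧) = 3 := by
    rw [show (3 : ℚ) = 1 + 1 + 1 by norm_num, map_add, map_add, map_one]
    norm_num
  have c2 : (PowerSeries.C 2 : ℚ⟦X⟧) = 2 := by
    rw [show (2 : ℚ) = 1 + 1 by norm_num, map_add, map_one]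
    norm_num
  have hB : (3 : ℚ⟦X⟧) * theta Qser = Pser * Qser - Rser := by rw [← c3]; exact idB
  have hC : (2 : ℚ⟦X⟧) * theta Rser = Pser * Rser - Qser * Qser := by rw [← c2]; exact idC
  rw [Eser, theta_sub, theta_mul, theta_mul, theta_mul]
  linear_combination (Qser * Qser) * hB - Rser * hC

lemma coeff_E_zero : coeff 0 Eser = 0 := by
  rw [Eser, map_sub, c0mul, c0mul, c0mul]
  simp [Qser, Rser]

lemma dq_rec (m : ℕ) (hm : 1 ≤ m) :
    (m : ℚ) * dq m = dq m - 24 * ∑ k ∈ Finset.Ico 1 m, sg 1 (m - k) * dq k := by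
  have h := congrArg (coeff m) thetaE
  rw [coeff_theta, coeff_mul_split _ _ m hm, coeff_E_zero, mul_zero, add_zero] at h
  have hP0 : coeff 0 Pser = 1 := by simp [Pser]
  rw [hP0, one_mul] at h
  have h4 : ∑ k ∈ Finset.Ico 1 m, coeff k Pser * coeff (m - k) Eser
      = -24 * ∑ k ∈ Finset.Ico 1 m, sg 1 (m - k) * dq k := by
    have e1 : ∑ k ∈ Finset.Ico 1 m, coeff k Pser * coeff (m - k) Eser
        = ∑ k ∈ Finset.Ico 1 m, (-24) * (sg 1 k * dq (m - k)) := by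
      refine Finset.sum_congr rfl (fun k hk => ?_)
      simp only [Finset.mem_Ico] at hk
      have hPk : coeff k Pser = -24 * sg 1 k := by
        simp only [Pser, coeff_mk]
        rw [if_neg (show ¬ k = 0 by omega)]
      rw [hPk, dq]
      ring
    rw [e1, ← Finset.mul_sum, sum_Ico_reflect m (fun k => sg 1 k * dq (m - k))]
    congr 1
    refine Finset.sum_congr rfl (fun k hk => ?_)
    simp only [Finset.mem_Ico] at hk
    rw [show m - (m - k) = k by omega]
  rw [h4] at h
  rw [show coeff m Eser = dq m from rfl] at h
  linarith [h]

lemma dq_zero : dq 0 = 0 := coeff_E_zero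

lemma sg_one_eval (r : ℕ) : sg r 1 = 1 := by
  simp [sg, ArithmeticFunction.sigma_apply]

lemma dq_one : dq 1 = 1728 := by
  have cQ0 : coeff 0 Qser = 1 := by simp [Qser]
  have cQ1 : coeff 1 Qser = 240 := by simp [Qser, sg_one_eval]
  have cR0 : coeff 0 Rser = 1 := by simp [Rser]
  have cR1 : coeff 1 Rser = -504 := by simp [Rser, sg_one_eval]
  have hQQ1 : coeff 1 (Qser * Qser) = 480 := by
    rw [coeff_mul_split _ _ 1 (le_refl 1)]
    simp [cQ0, cQ1]
    norm_num
  have hQQ0 : coeff 0 (Qser * Qser) = 1 := by rw [c0mul, cQ0]; norm_num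
  have hRR1 : coeff 1 (Rser * Rser) = -1008 := by
    rw [coeff_mul_split _ _ 1 (le_refl 1)]
    simp [cR0, cR1]
    norm_num
  have hQQQ1 : coeff 1 (Qser * Qser * Qser) = 720 := by
    rw [coeff_mul_split _ _ 1 (le_refl 1)]
    simp [hQQ0, hQQ1, cQ0, cQ1]
    norm_num
  rw [dq, Eser, map_sub, hQQQ1, hRR1]
  norm_num

/-! ### 1728 τ = coefficients of Q³ - R² -/

lemma key_eq (m : ℕ) : 1728 * tq m = dq m := by
  induction m using Nat.strong_induction_on with
  | _ m ih =>
    match m with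
    | 0 => rw [tq_zero, dq_zero]; norm_num
    | 1 => rw [tq_one, dq_one]; norm_num
    | (m + 2) =>
      have h1 := tq_rec (m + 2) (by omega)
      have h2 := dq_rec (m + 2) (by omega)
      have hsum : ∑ k ∈ Finset.Ico 1 (m + 2), sg 1 (m + 2 - k) * dq k
          = 1728 * ∑ k ∈ Finset.Ico 1 (m + 2), sg 1 (m + 2 - k) * tq k := by
        rw [Finset.mul_sum]
        refine Finset.sum_congr rfl (fun k hk => ?_)
        simp only [Finset.mem_Ico] at hk
        rw [← ih k (by omega)]
        ring
      have e : (((m + 2 : ℕ) : ℚ) - 1) * (1728 * tq (m + 2) - dq (m + 2)) = 0 := by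
        linear_combination (1728 : ℚ) * h1 - h2 + 24 * hsum
      have hm1 : (((m + 2 : ℕ) : ℚ) - 1) ≠ 0 := by
        push_cast
        have : (0 : ℚ) ≤ (m : ℚ) := Nat.cast_nonneg m
        intro hc
        nlinarith
      rcases mul_eq_zero.mp e with hc | hc
      · exact absurd hc hm1
      · linarith [hc]

/-! ### Explicit formula for the coefficients of Q³ - R² -/

lemma QQ_eq : Qser * Qser = PowerSeries.mk (fun m => if m = 0 then (1 : ℚ) else 480 * sg 7 m) := by
  ext m
  rcases Nat.eq_zero_or_pos m with hm | hm
  · subst hm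
    rw [c0mul]
    simp [Qser]
  · have h0 : m ≠ 0 := by omega
    rw [coeff_mul_split _ _ m hm]
    simp only [Qser, coeff_mk, if_neg h0, if_true]
    have hsum : ∑ k ∈ Finset.Ico 1 m,
        (if k = 0 then (1 : ℚ) else 240 * sg 3 k) * (if m - k = 0 then (1 : ℚ) else 240 * sg 3 (m - k))
        = 57600 * ∑ k ∈ Finset.Ico 1 m, sg 3 k * sg 3 (m - k) := by
      rw [Finset.mul_sum]
      refine Finset.sum_congr rfl (fun k hk => ?_)
      simp only [Finset.mem_Ico] at hk
      rw [if_neg (by omega), if_neg (by omega)]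
      ring
    rw [hsum]
    have hC := convC m
    linear_combination (14400 : ℚ) * hC

lemma dq_formula (m : ℕ) (hm : 1 ≤ m) :
    dq m = 240 * sg 3 m + 480 * sg 7 m
      + 115200 * ∑ k ∈ Finset.Ico 1 m, sg 3 k * sg 7 (m - k)
      + 1008 * sg 5 m - 254016 * ∑ k ∈ Finset.Ico 1 m, sg 5 k * sg 5 (m - k) := by
  have h0 : m ≠ 0 := by omega
  rw [dq, Eser, mul_assoc, QQ_eq, map_sub, coeff_mul_split _ _ m hm,
    coeff_mul_split Rser Rser m hm]
  simp only [Qser, Rser, coeff_mk, if_neg h0, if_true]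
  have hsum1 : ∑ k ∈ Finset.Ico 1 m,
      (if k = 0 then (1 : ℚ) else 240 * sg 3 k) *
        (if m - k = 0 then (1 : ℚ) else 480 * sg 7 (m - k))
      = 115200 * ∑ k ∈ Finset.Ico 1 m, sg 3 k * sg 7 (m - k) := by
    rw [Finset.mul_sum]
    refine Finset.sum_congr rfl (fun k hk => ?_)
    simp only [Finset.mem_Ico] at hk
    rw [if_neg (by omega), if_neg (by omega)]
    ring
  have hsum2 : ∑ k ∈ Finset.Ico 1 m,
      (if k = 0 then (1 : ℚ) else -504 * sg 5 k) *
        (if m - k = 0 then (1 : ℚ) else -504 * sg 5 (m - k))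
      = 254016 * ∑ k ∈ Finset.Ico 1 m, sg 5 k * sg 5 (m - k) := by
    rw [Finset.mul_sum]
    refine Finset.sum_congr rfl (fun k hk => ?_)
    simp only [Finset.mem_Ico] at hk
    rw [if_neg (by omega), if_neg (by omega)]
    ring
  rw [hsum1, hsum2]
  ring

/-! ### Connecting with ramanujanTau -/

lemma tau_eq_tq (n : ℕ) : ((ramanujanTau n : ℤ) : ℚ) = tq n := by
  set φ : Polynomial ℤ →+* ℚ⟦X⟧ :=
    (Polynomial.coeToPowerSeries.ringHom (R := ℚ)).comp
      (Polynomial.mapRingHom (Int.castRingHom ℚ)) with hφ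
  have hcoeff : ∀ p : Polynomial ℤ, ∀ k : ℕ, coeff k (φ p) = ((p.coeff k : ℤ) : ℚ) := by
    intro p k
    simp [φ, Polynomial.coeff_coe, Polynomial.coeff_map]
  have hX : φ Polynomial.X = X := by
    simp [φ]
  have himg : φ (Polynomial.X * ∏ i ∈ Finset.range n, (1 - Polynomial.X ^ (i + 1)) ^ 24)
      = Fser n := by
    rw [map_mul, map_prod, hX, Fser]
    congr 1
    refine Finset.prod_congr rfl (fun i _ => ?_)
    rw [map_pow, map_sub, map_one, map_pow, hX]
  have := hcoeff (Polynomial.X * ∏ i ∈ Finset.range n, (1 - Polynomial.X ^ (i + 1)) ^ 24) n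
  rw [himg] at this
  rw [ramanujanTau, ← this, tq]

/-! ### The integer-level identity -/

def NAn (n : ℕ) : ℕ := ∑ k ∈ Finset.Ico 1 n,
  ArithmeticFunction.sigma 3 k * ArithmeticFunction.sigma 7 (n - k)
def NBn (n : ℕ) : ℕ := ∑ k ∈ Finset.Ico 1 n,
  ArithmeticFunction.sigma 5 k * ArithmeticFunction.sigma 5 (n - k)
def NB'n (n : ℕ) : ℕ := ∑ k ∈ Finset.Ico 1 n,
  ArithmeticFunction.sigma 1 k * ArithmeticFunction.sigma 5 (n - k)
def Tn (n : ℕ) : ℕ := ∑ k ∈ Finset.Ico 1 n,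
  ArithmeticFunction.sigma 1 k * ArithmeticFunction.sigma 1 (n - k)

lemma main_int (n : ℕ) (hn : 1 ≤ n) :
    (1728 : ℤ) * ramanujanTau n
      = 240 * (ArithmeticFunction.sigma 3 n : ℤ) + 480 * (ArithmeticFunction.sigma 7 n : ℤ)
        + 115200 * (NAn n : ℤ) + 1008 * (ArithmeticFunction.sigma 5 n : ℤ)
        - 254016 * (NBn n : ℤ) := by
  have h := key_eq n
  rw [← tau_eq_tq, dq_formula n hn] at h
  have hA : ∑ k ∈ Finset.Ico 1 n, sg 3 k * sg 7 (n - k) = ((NAn n : ℕ) : ℚ) := by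
    rw [NAn]
    push_cast
    rfl
  have hB : ∑ k ∈ Finset.Ico 1 n, sg 5 k * sg 5 (n - k) = ((NBn n : ℕ) : ℚ) := by
    rw [NBn]
    push_cast
    rfl
  rw [hA, hB] at h
  have h2 : ((1728 * ramanujanTau n : ℤ) : ℚ)
      = ((240 * (ArithmeticFunction.sigma 3 n : ℤ) + 480 * (ArithmeticFunction.sigma 7 n : ℤ)
        + 115200 * (NAn n : ℤ) + 1008 * (ArithmeticFunction.sigma 5 n : ℤ)
        - 254016 * (NBn n : ℤ) : ℤ) : ℚ) := by
    push_cast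
    simp only [sg] at h
    linarith [h]
  exact_mod_cast h2

lemma conv15_int (n : ℕ) :
    (504 : ℤ) * (NB'n n : ℤ)
      = (ArithmeticFunction.sigma 1 n : ℤ) + 21 * (ArithmeticFunction.sigma 5 n : ℤ)
        + 20 * (ArithmeticFunction.sigma 7 n : ℤ)
        - 42 * (n : ℤ) * (ArithmeticFunction.sigma 5 n : ℤ) := by
  have h := convB n
  have hB : ∑ k ∈ Finset.Ico 1 n, sg 1 k * sg 5 (n - k) = ((NB'n n : ℕ) : ℚ) := by
    rw [NB'n]
    push_cast
    rfl
  rw [hB] at h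
  have h2 : ((504 * (NB'n n : ℤ) : ℤ) : ℚ)
      = (((ArithmeticFunction.sigma 1 n : ℤ) + 21 * (ArithmeticFunction.sigma 5 n : ℤ)
        + 20 * (ArithmeticFunction.sigma 7 n : ℤ)
        - 42 * (n : ℤ) * (ArithmeticFunction.sigma 5 n : ℤ) : ℤ) : ℚ) := by
    push_cast
    simp only [sg] at h
    linear_combination (21 : ℚ) * h
  exact_mod_cast h2

/-! ### The congruence mod 5 -/

lemma sigma5_mod (k : ℕ) :
    ((ArithmeticFunction.sigma 5 k : ℕ) : ZMod 5) = ((ArithmeticFunction.sigma 1 k : ℕ) : ZMod 5) := by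
  haveI : Fact (Nat.Prime 5) := ⟨by norm_num⟩
  rw [ArithmeticFunction.sigma_apply, ArithmeticFunction.sigma_apply]
  push_cast
  refine Finset.sum_congr rfl (fun d _ => ?_)
  rw [pow_one, ZMod.pow_card]

lemma NB_mod (n : ℕ) : ((NBn n : ℕ) : ZMod 5) = ((Tn n : ℕ) : ZMod 5) := by
  rw [NBn, Tn]
  push_cast
  refine Finset.sum_congr rfl (fun k _ => ?_)
  rw [sigma5_mod, sigma5_mod]

lemma NB'_mod (n : ℕ) : ((NB'n n : ℕ) : ZMod 5) = ((Tn n : ℕ) : ZMod 5) := by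
  rw [NB'n, Tn]
  push_cast
  refine Finset.sum_congr rfl (fun k _ => ?_)
  rw [sigma5_mod]

theorem tau_congruent_mod_five (n : ℕ) (hn : 1 ≤ n) :
    ramanujanTau n ≡ (n * ArithmeticFunction.sigma 1 n : ℕ) [ZMOD 5] := by
  haveI : Fact (Nat.Prime 5) := ⟨by norm_num⟩
  have hgoal : ((ramanujanTau n : ℤ) : ZMod 5)
      = (((n * ArithmeticFunction.sigma 1 n : ℕ) : ℤ) : ZMod 5) := by
    have h1 := congrArg (fun z : ℤ => (z : ZMod 5)) (main_int n hn)
    have h2 := congrArg (fun z : ℤ => (z : ZMod 5)) (conv15_int n)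
    push_cast at h1 h2 ⊢
    have h3 := sigma5_mod n
    have h4 := NB_mod n
    have h5 := NB'_mod n
    have c5 : (5 : ZMod 5) = 0 := by exact_mod_cast ZMod.natCast_self 5
    linear_combination (2 : ZMod 5) * h1 + 2 * h2 + (3 + (n : ZMod 5)) * h3 + 3 * h4 + 2 * h5
      + (-(691 * ((ramanujanTau n : ℤ) : ZMod 5))
         + 96 * ((ArithmeticFunction.sigma 3 n : ℕ) : ZMod 5)
         + 200 * ((ArithmeticFunction.sigma 7 n : ℕ) : ZMod 5)
         + 46080 * ((NAn n : ℕ) : ZMod 5)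
         + 411 * ((ArithmeticFunction.sigma 5 n : ℕ) : ZMod 5)
         - 101607 * ((NBn n : ℕ) : ZMod 5)
         - 202 * ((NB'n n : ℕ) : ZMod 5)
         + ((ArithmeticFunction.sigma 1 n : ℕ) : ZMod 5)
         - 17 * (n : ZMod 5) * ((ArithmeticFunction.sigma 5 n : ℕ) : ZMod 5)
         + ((Tn n : ℕ) : ZMod 5)) * c5
  exact (ZMod.intCast_eq_intCast_iff _ _ _).mp hgoal
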